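/- Let κ be a set, t ∈ ω^{<ω}, α₀ ∈ κ, and let F ⊆ κ be a finite set with α₀ ∉ F. Then for ν-almost every ρ ∈ Ω, the point t belongs to the closure of W_{α₀}(ρ) with respect to the topology on ω^{<ω} generated by τ₀ ∪ {U_α(ρ) : α ∈ F}; equivalently, no neighborhood of t in that topology is contained in U_{α₀}(ρ). -/

import Mathlib

open MeasureTheory
open scoped ENNReal

/-- The cone `[t] = {s : t ⊆ s}`. -/
def cone (t : List ℕ) : Set (List ℕ) := {s | t <+: s}

/-- The subbasis for the topology `τ₀`: all cones and all complements of cones. -/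
def subbasis0 : Set (Set (List ℕ)) :=
  {C | ∃ t, C = cone t} ∪ {C | ∃ t, C = (cone t)ᶜ}

/-- The topology `τ₀` on `ω^{<ω}`. -/
def tau0 : TopologicalSpace (List ℕ) := TopologicalSpace.generateFrom subbasis0

/-- `sFnP e α n ρ` is the finite sequence `t_n ⌢ ⟨ρ(α,t_n,0), …, ρ(α,t_n,n+1)⟩`. -/
def sFnP {κ : Type*} (e : ℕ → List ℕ) (α : κ) (n : ℕ) (ρ : κ × List ℕ × ℕ → ℕ) : List ℕ :=
  e n ++ List.ofFn fun i : Fin (n + 2) => ρ (α, e n, (i : ℕ))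

/-- `WsetP e α ρ = {s : s_{α,t_n}(ρ) ⊆ s for some n}`. -/
def WsetP {κ : Type*} (e : ℕ → List ℕ) (α : κ) (ρ : κ × List ℕ × ℕ → ℕ) : Set (List ℕ) :=
  {s | ∃ n, sFnP e α n ρ <+: s}

/-- `UsetP e α ρ = ω^{<ω} ∖ W_α(ρ)`. -/
def UsetP {κ : Type*} (e : ℕ → List ℕ) (α : κ) (ρ : κ × List ℕ × ℕ → ℕ) : Set (List ℕ) :=
  (WsetP e α ρ)ᶜ


section Aux

open Filter

lemma tsum_pi_fin (f : ℕ → ℝ≥0∞) : ∀ N, (∑' g : Fin N → ℕ, ∏ i, f (g i)) = (∑' m, f m) ^ N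
  | 0 => by
    rw [pow_zero, tsum_eq_single (default : Fin 0 → ℕ)
      (fun b hb => absurd (Subsingleton.elim b default) hb)]
    simp
  | (N+1) => by
    rw [pow_succ']
    have h0 : (∑' g : Fin (N+1) → ℕ, ∏ i, f (g i))
        = ∑' p : ℕ × (Fin N → ℕ), ∏ i, f ((Fin.consEquiv (fun _ => ℕ)) p i) :=
      ((Fin.consEquiv (fun _ => ℕ)).tsum_eq (fun g => ∏ i, f (g i))).symm
    rw [h0]
    have h1 : ∀ (p : ℕ × (Fin N → ℕ)),
        (∏ i, f ((Fin.consEquiv (fun _ => ℕ)) p i)) = f p.1 * ∏ i, f (p.2 i) := by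
      intro p
      rw [Fin.prod_univ_succ]
      simp [Fin.consEquiv]
    simp_rw [h1]
    rw [ENNReal.tsum_prod (f := fun (a : ℕ) (g : Fin N → ℕ) => f a * ∏ i, f (g i))]
    simp_rw [ENNReal.tsum_mul_left, ENNReal.tsum_mul_right]
    rw [tsum_pi_fin f N]

lemma geom_bound : (∑' m : ℕ, ((2:ℝ≥0∞)⁻¹ * 2⁻¹) ^ (m+1)) ≤ 2⁻¹ := by
  have h : ∀ m : ℕ, ((2:ℝ≥0∞)⁻¹ * 2⁻¹) ^ (m+1) ≤ (2⁻¹ * 2⁻¹) * 2⁻¹ ^ m := by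
    intro m
    rw [pow_succ']
    gcongr
    exact mul_le_of_le_one_right zero_le (by simp)
  calc (∑' m : ℕ, ((2:ℝ≥0∞)⁻¹ * 2⁻¹) ^ (m+1)) ≤ ∑' m : ℕ, ((2:ℝ≥0∞)⁻¹ * 2⁻¹) * 2⁻¹ ^ m :=
        ENNReal.tsum_le_tsum h
    _ = (2⁻¹ * 2⁻¹) * (1 - 2⁻¹)⁻¹ := by rw [ENNReal.tsum_mul_left, ENNReal.tsum_geometric]
    _ = 2⁻¹ := by
        rw [ENNReal.one_sub_inv_two, inv_inv, mul_assoc, ENNReal.inv_mul_cancel two_ne_zero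
          ENNReal.ofNat_ne_top, mul_one]

lemma cyl_bound {κ : Type*} (ν : Measure (κ × List ℕ × ℕ → ℕ))
    (hν : ∀ (Fs : Finset (κ × List ℕ × ℕ)) (g : κ × List ℕ × ℕ → ℕ),
      ν {ρ | ∀ c ∈ Fs, ρ c = g c} = ∏ c ∈ Fs, ((2 : ℝ≥0∞)⁻¹) ^ (g c + 1))
    {α α₀ : κ} (hne : α ≠ α₀) (u : List ℕ) (N : ℕ) :
    ν {ρ | ∀ i < N, ρ (α, u, i) = ρ (α₀, u, i)} ≤ 2⁻¹ ^ N := by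
  classical
  set Fs : Finset (κ × List ℕ × ℕ) :=
    ((Finset.range N).image fun i => (α, u, i)) ∪ ((Finset.range N).image fun i => (α₀, u, i))
    with hFs
  have hsub : {ρ : κ × List ℕ × ℕ → ℕ | ∀ i < N, ρ (α, u, i) = ρ (α₀, u, i)}
      ⊆ ⋃ g : Fin N → ℕ,
        {ρ | ∀ c ∈ Fs, ρ c = (fun c : κ × List ℕ × ℕ =>
          if h : c.2.2 < N then g ⟨c.2.2, h⟩ else 0) c} := by
    intro ρ hρ
    refine Set.mem_iUnion.2 ⟨fun i => ρ (α₀, u, i.1), fun c hc => ?_⟩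
    simp only [hFs, Finset.mem_union, Finset.mem_image, Finset.mem_range] at hc
    rcases hc with ⟨i, hi, rfl⟩ | ⟨i, hi, rfl⟩
    · simp only [dif_pos hi]
      exact hρ i hi
    · simp only [dif_pos hi]
  refine le_trans (le_trans (measure_mono hsub) (measure_iUnion_le _)) ?_
  have hmeas : ∀ g : Fin N → ℕ,
      ν {ρ | ∀ c ∈ Fs, ρ c = (fun c : κ × List ℕ × ℕ =>
        if h : c.2.2 < N then g ⟨c.2.2, h⟩ else 0) c}
      = ∏ i ∈ Finset.range N,
          ((2:ℝ≥0∞)⁻¹ * 2⁻¹) ^ ((if h : i < N then g ⟨i, h⟩ else 0) + 1) := by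
    intro g
    rw [hν]
    have hdisj : Disjoint ((Finset.range N).image fun i => ((α, u, i) : κ × List ℕ × ℕ))
        ((Finset.range N).image fun i => ((α₀, u, i) : κ × List ℕ × ℕ)) := by
      rw [Finset.disjoint_left]
      rintro c hc1 hc2
      simp only [Finset.mem_image] at hc1 hc2
      obtain ⟨i, _, rfl⟩ := hc1
      obtain ⟨i', _, h⟩ := hc2
      exact hne (congrArg Prod.fst h).symm
    rw [hFs, Finset.prod_union hdisj,
      Finset.prod_image (by intro x _ y _ h; simpa using h),
      Finset.prod_image (by intro x _ y _ h; simpa using h),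
      ← Finset.prod_mul_distrib]
    apply Finset.prod_congr rfl
    intro i _
    rw [mul_pow]
  rw [tsum_congr hmeas]
  have hconv : ∀ g : Fin N → ℕ,
      (∏ i ∈ Finset.range N,
        ((2:ℝ≥0∞)⁻¹ * 2⁻¹) ^ ((if h : i < N then g ⟨i, h⟩ else 0) + 1))
      = ∏ i : Fin N, (fun m => ((2:ℝ≥0∞)⁻¹ * 2⁻¹) ^ (m + 1)) (g i) := by
    intro g
    rw [← Fin.prod_univ_eq_prod_range
      (fun i => ((2:ℝ≥0∞)⁻¹ * 2⁻¹) ^ ((if h : i < N then g ⟨i, h⟩ else 0) + 1)) N]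
    apply Finset.prod_congr rfl
    intro i _
    simp [i.isLt]
  rw [tsum_congr hconv]
  exact le_trans (le_of_eq (tsum_pi_fin (fun m => ((2:ℝ≥0∞)⁻¹ * 2⁻¹) ^ (m + 1)) N))
    (pow_le_pow_left' geom_bound N)

lemma cone_injective : Function.Injective cone := by
  intro a b h
  have ha : a ∈ cone b := h ▸ List.prefix_refl a
  have hb : b ∈ cone a := h.symm ▸ List.prefix_refl b
  exact List.IsPrefix.eq_of_length hb (le_antisymm hb.length_le ha.length_le)

lemma prefixes_finite (t : List ℕ) : {u : List ℕ | u <+: t}.Finite := by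
  have : {u : List ℕ | u <+: t} ⊆ (fun n => t.take n) '' Set.Iic t.length := by
    intro u hu
    exact ⟨u.length, Set.mem_Iic.2 hu.length_le, (List.prefix_iff_eq_take.1 hu).symm⟩
  exact ((Set.finite_Iic _).image _).subset this

lemma key_lemma {κ : Type*} (e : ℕ → List ℕ) (hinj : Function.Injective e)
    (hord : ∀ n ℓ, e n <+: e ℓ → e n ≠ e ℓ → n < ℓ)
    (t : List ℕ) (α₀ α : κ)
    (n : ℕ → ℕ) (hnj : ∀ j, e (n j) = t ++ [j]) (hjn : ∀ j, j ≤ n j + 2)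
    (ρ : κ × List ℕ × ℕ → ℕ) (ht : t ∉ WsetP e α ρ) (j : ℕ)
    (hs : sFnP e α₀ (n j) ρ ∈ WsetP e α ρ) :
    (∃ u, u <+: t ∧ ρ (α, u, t.length - u.length) = j) ∨
      (∀ i < j, ρ (α, t ++ [j], i) = ρ (α₀, t ++ [j], i)) := by
  obtain ⟨m, hm⟩ := hs
  have hlen_s : (sFnP e α₀ (n j) ρ).length = t.length + 1 + (n j + 2) := by
    simp [sFnP, hnj]
    omega
  have hlen_m : (sFnP e α m ρ).length = (e m).length + (m + 2) := by simp [sFnP]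
  have h1 : e m <+: sFnP e α₀ (n j) ρ := (List.prefix_append _ _).trans hm
  have h2 : t ++ [j] <+: sFnP e α₀ (n j) ρ := by
    unfold sFnP; rw [hnj]; exact List.prefix_append _ _
  have ht' : t <+: sFnP e α₀ (n j) ρ := (List.prefix_append t [j]).trans h2
  rcases lt_trichotomy (e m).length (t.length + 1) with hcase | hcase | hcase
  · have hu : e m <+: t := List.prefix_of_prefix_length_le h1 ht' (by
      simpa using Nat.lt_succ_iff.1 hcase)
    by_cases hlen : (sFnP e α m ρ).length ≤ t.length
    · exact absurd ⟨m, List.prefix_of_prefix_length_le hm ht' hlen⟩ ht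
    · left
      refine ⟨e m, hu, ?_⟩
      have hgt : t.length < (sFnP e α m ρ).length := not_le.1 hlen
      have hts : t.length < (sFnP e α₀ (n j) ρ).length := by omega
      have d1 : (sFnP e α m ρ)[t.length]'hgt
          = (sFnP e α₀ (n j) ρ)[t.length]'hts := hm.getElem hgt
      have d2 : (sFnP e α₀ (n j) ρ)[t.length]'hts = j := by
        rw [← h2.getElem (show t.length < (t ++ [j]).length by simp)]
        exact List.getElem_concat_length rfl _
      have d3 : (sFnP e α m ρ)[t.length]'hgt = ρ (α, e m, t.length - (e m).length) := by
        simp only [sFnP]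
        simp only [List.getElem_append_right (show (e m).length ≤ t.length by omega)]
        rw [List.getElem_ofFn]
      rw [← d3, d1, d2]
  · right
    have hequ : e m = t ++ [j] :=
      (List.prefix_of_prefix_length_le h1 h2 (by simp; omega)).eq_of_length
        (by simp [hcase])
    have hmn : m = n j := hinj (by rw [hequ, hnj])
    subst hmn
    have heq : sFnP e α (n j) ρ = sFnP e α₀ (n j) ρ :=
      hm.eq_of_length (by rw [hlen_m, hlen_s, hequ]; simp)
    have heq' : (List.ofFn fun i : Fin (n j + 2) => ρ (α, e (n j), (i : ℕ)))
        = List.ofFn fun i : Fin (n j + 2) => ρ (α₀, e (n j), (i : ℕ)) :=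
      List.append_cancel_left heq
    have hfun := List.ofFn_inj.1 heq'
    intro i hi
    have hi' : i < n j + 2 := by have := hjn j; omega
    have hv := congrFun hfun ⟨i, hi'⟩
    simp only at hv
    rw [hnj j] at hv
    exact hv
  · exfalso
    have hpre : t ++ [j] <+: e m := List.prefix_of_prefix_length_le h2 h1 (by simp; omega)
    have hne' : e (n j) ≠ e m := by
      rw [hnj]
      intro h
      apply_fun List.length at h
      simp at h
      omega
    have hlt : n j < m := hord (n j) m (by rw [hnj]; exact hpre) hne'
    have hle := hm.length_le
    rw [hlen_m, hlen_s] at hle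
    omega

lemma det_lemma {κ : Type*} (e : ℕ → List ℕ) (hbij : Function.Bijective e)
    (hord : ∀ n ℓ, e n <+: e ℓ → e n ≠ e ℓ → n < ℓ)
    (t : List ℕ) (α₀ : κ) (F : Set κ) (hF : F.Finite)
    (n : ℕ → ℕ) (hnj : ∀ j, e (n j) = t ++ [j]) (hjn : ∀ j, j ≤ n j + 2)
    (ρ : κ × List ℕ × ℕ → ℕ)
    (hfin : ∀ α ∈ F, {j | ∀ i < j, ρ (α, t ++ [j], i) = ρ (α₀, t ++ [j], i)}.Finite) :
    t ∈ @closure _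
        (TopologicalSpace.generateFrom (subbasis0 ∪ ((fun α => UsetP e α ρ) '' F)))
        (WsetP e α₀ ρ) := by
  classical
  letI T : TopologicalSpace (List ℕ) :=
    TopologicalSpace.generateFrom (subbasis0 ∪ ((fun α => UsetP e α ρ) '' F))
  have hb := TopologicalSpace.isTopologicalBasis_of_subbasis
    (s := subbasis0 ∪ ((fun α => UsetP e α ρ) '' F)) (t := T) rfl
  rw [hb.mem_closure_iff]
  rintro o ⟨f, ⟨hfFin, hfsub⟩, rfl⟩ hto
  set BadJ : Set ℕ := ⋃ α ∈ F, ({j | ∀ i < j, ρ (α, t ++ [j], i) = ρ (α₀, t ++ [j], i)} ∪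
      (fun u => ρ (α, u, t.length - u.length)) '' {u | u <+: t}) with hBadJ
  have hBadFin : BadJ.Finite :=
    hF.biUnion fun α hα => ((hfin α hα).union ((prefixes_finite t).image _))
  set Us : Set (List ℕ) := {u | (cone u)ᶜ ∈ f} with hUs
  have hUsFin : Us.Finite := by
    have hUeq : Us = (fun u => (cone u)ᶜ) ⁻¹' f := rfl
    rw [hUeq]
    exact hfFin.preimage fun a _ b _ h => cone_injective (compl_injective h)
  set M1 : ℕ := hUsFin.toFinset.sup fun u => u.getD t.length 0 with hM1
  set M2 : ℕ := hBadFin.toFinset.sup id with hM2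
  set j : ℕ := M1 + M2 + 1 with hj
  have hjBad : j ∉ BadJ := by
    intro h
    have : j ≤ M2 := Finset.le_sup (f := id) (hBadFin.mem_toFinset.2 h)
    omega
  have hjU : ∀ u ∈ Us, u.getD t.length 0 < j := by
    intro u hu
    have : u.getD t.length 0 ≤ M1 :=
      Finset.le_sup (f := fun u => u.getD t.length 0) (hUsFin.mem_toFinset.2 hu)
    omega
  have hts : t ++ [j] <+: sFnP e α₀ (n j) ρ := by
    unfold sFnP; rw [hnj]; exact List.prefix_append _ _
  have htt : t <+: sFnP e α₀ (n j) ρ := (List.prefix_append t [j]).trans hts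
  refine ⟨sFnP e α₀ (n j) ρ, Set.mem_sInter.2 ?_, ⟨n j, List.prefix_refl _⟩⟩
  intro A hA
  rcases hfsub hA with hA0 | hAU
  · rcases hA0 with ⟨u, rfl⟩ | ⟨u, rfl⟩
    · have hut : u <+: t := Set.mem_sInter.1 hto _ hA
      exact hut.trans htt
    · have hnut : ¬ u <+: t := Set.mem_sInter.1 hto _ hA
      intro hus
      by_cases hul : u.length ≤ t.length
      · exact hnut (List.prefix_of_prefix_length_le hus htt hul)
      · have hlu : t.length < u.length := not_le.1 hul
        have hpre : t ++ [j] <+: u :=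
          List.prefix_of_prefix_length_le hts hus (by simp; omega)
        have hgetd : u.getD t.length 0 = j := by
          have h1 : u[t.length]'(by omega) = j := by
            rw [← hpre.getElem (show t.length < (t ++ [j]).length by simp)]
            exact List.getElem_concat_length rfl _
          rw [List.getD_eq_getElem u 0 (by omega), h1]
        have := hjU u hA
        omega
  · obtain ⟨α, hαF, rfl⟩ := hAU
    have htU : t ∉ WsetP e α ρ := Set.mem_sInter.1 hto _ hA
    simp only [UsetP, Set.mem_compl_iff]
    intro hsW
    have hkey := key_lemma e hbij.1 hord t α₀ α n hnj hjn ρ htU j hsW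
    apply hjBad
    rw [hBadJ]
    refine Set.mem_biUnion hαF ?_
    rcases hkey with ⟨u, hu, hval⟩ | hE
    · exact Or.inr ⟨u, hu, hval⟩
    · exact Or.inl hE

end Aux

theorem stmt4 {κ : Type*}
    (e : ℕ → List ℕ) (hbij : Function.Bijective e)
    (hord : ∀ n ℓ, e n <+: e ℓ → e n ≠ e ℓ → n < ℓ)
    (hsuc : ∀ n ℓ t k, e n = t ++ [k] → e ℓ = t ++ [k + 1] → n < ℓ)
    (ν : Measure (κ × List ℕ × ℕ → ℕ)) [IsProbabilityMeasure ν]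
    (hν : ∀ (F : Finset (κ × List ℕ × ℕ)) (g : κ × List ℕ × ℕ → ℕ),
      ν {ρ | ∀ c ∈ F, ρ c = g c} = ∏ c ∈ F, ((2 : ℝ≥0∞)⁻¹) ^ (g c + 1))
    (t : List ℕ) (α₀ : κ) (F : Set κ) (hF : F.Finite) (hα₀ : α₀ ∉ F) :
    ∀ᵐ ρ ∂ν,
      t ∈ @closure _
        (TopologicalSpace.generateFrom (subbasis0 ∪ ((fun α => UsetP e α ρ) '' F)))
        (WsetP e α₀ ρ) := by
  classical
  have hex : ∀ j : ℕ, ∃ m, e m = t ++ [j] := fun j => hbij.2 _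
  set n : ℕ → ℕ := fun j => (hex j).choose with hn
  have hnj : ∀ j, e (n j) = t ++ [j] := fun j => (hex j).choose_spec
  have hmono : StrictMono n := strictMono_nat_of_lt_succ fun j =>
    hsuc (n j) (n (j+1)) t j (hnj j) (hnj (j+1))
  have hjn : ∀ j, j ≤ n j + 2 := fun j => le_trans hmono.le_apply (by omega)
  set E : κ → ℕ → Set (κ × List ℕ × ℕ → ℕ) :=
    fun α j => {ρ | ∀ i < j, ρ (α, t ++ [j], i) = ρ (α₀, t ++ [j], i)} with hE
  have hBC : ∀ α ∈ F, ν (Filter.limsup (E α) Filter.atTop) = 0 := by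
    intro α hα
    apply MeasureTheory.measure_limsup_atTop_eq_zero
    have hle : ∀ j, ν (E α j) ≤ 2⁻¹ ^ j := fun j =>
      cyl_bound ν hν (fun h => hα₀ (by rw [← h]; exact hα)) (t ++ [j]) j
    have hsum : (∑' j, ν (E α j)) ≤ ∑' j : ℕ, (2:ℝ≥0∞)⁻¹ ^ j := ENNReal.tsum_le_tsum hle
    rw [ENNReal.tsum_geometric, ENNReal.one_sub_inv_two, inv_inv] at hsum
    exact ne_top_of_le_ne_top ENNReal.ofNat_ne_top hsum
  set G : Set (κ × List ℕ × ℕ → ℕ) := {ρ | ∀ α ∈ F, {j | ρ ∈ E α j}.Finite} with hG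
  have hGc : ν Gᶜ = 0 := by
    have hsub : Gᶜ ⊆ ⋃ α ∈ F, Filter.limsup (E α) Filter.atTop := by
      intro ρ hρ
      simp only [hG, Set.mem_compl_iff, Set.mem_setOf_eq] at hρ
      push_neg at hρ
      obtain ⟨α, hα, hinf⟩ := hρ
      refine Set.mem_biUnion hα ?_
      rw [Filter.mem_limsup_iff_frequently_mem, Nat.frequently_atTop_iff_infinite]
      exact hinf
    exact measure_mono_null hsub ((measure_biUnion_null_iff hF.countable).2 hBC)
  rw [MeasureTheory.ae_iff]
  refine measure_mono_null ?_ hGc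
  intro ρ hρ
  simp only [Set.mem_compl_iff, hG, Set.mem_setOf_eq]
  intro hρG
  exact hρ (det_lemma e hbij hord t α₀ F hF n hnj hjn ρ hρG)
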